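/- Let W : X → Z be a stochastic matrix and a ∈ X such that for every probability distribution P on X with P(a) = 0, the total variation quantity ‖W_a − ∑_x P(x)W_x‖₁ ≥ δ. Let x^n, x̃^n ∈ X^n with Hamming distance d_H(x^{I_a}, x̃^{I_a}) ≥ κn on the index set I_a := {k : x̃_k = a}, and suppose |I_a| ≥ λn. Then the probability, when outputs are generated independently with z_k ∼ W_{x_k}, that z^n lies in the W-typical set T^n_{W,ε}(x̃^n) with ε := λδκ/(2|Z|), is at most 2·exp(-nε²/3). -/

import Mathlib

open Finset

/- Lemma 8 of the paper: if `x̃^n` pretends that many positions had input `a`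
(whose output distribution is ℓ₁-separated from the convex hull of the other
rows of `W`) while the true inputs `x^n` differ from `x̃^n` on at least `κn`
positions of `I_a := {k : x̃_k = a}`, and `|I_a| ≥ λn`, then the true output
sequence is `W`-typical for `x̃^n` with probability at most `2 exp(-nε²/3)`,
where `ε := λδκ/(2|Z|)`. -/
set_option maxHeartbeats 1000000


lemma exp_le_quad {x : ℝ} (h : |x| ≤ 1) : Real.exp x ≤ 1 + x + (3/4) * x^2 := by
  have h2 := Real.exp_bound h (by norm_num : (0:ℕ) < 2)
  have hs : ∑ m ∈ range 2, x ^ m / m.factorial = 1 + x := by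
    simp [Finset.sum_range_succ]
  rw [hs] at h2
  have h3 : |Real.exp x - (1 + x)| ≤ (3/4) * x^2 := by
    refine h2.trans (le_of_eq ?_)
    rw [sq_abs]; norm_num [Nat.factorial]; ring
  have := abs_le.1 h3
  linarith [this.2]

lemma chernoff_mgf {Z : Type*} [Fintype Z] {n : ℕ} (p f : Fin n → Z → ℝ)
    (hp0 : ∀ i z, 0 ≤ p i z) (hp1 : ∀ i, ∑ z, p i z = 1)
    (hf : ∀ i z, |f i z| ≤ 1) (hmean : ∀ i, ∑ z, p i z * f i z = 0)
    (hvar : ∀ i, ∑ z, p i z * (f i z)^2 ≤ 1/4) (t : ℝ) (ht : |t| ≤ 1) :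
    ∑ zs : Fin n → Z, (∏ i, p i (zs i)) * Real.exp (t * ∑ i, f i (zs i))
      ≤ Real.exp (3/16 * n * t^2) := by
  classical
  have key : ∀ zs : Fin n → Z,
      (∏ i, p i (zs i)) * Real.exp (t * ∑ i, f i (zs i))
        = ∏ i, (p i (zs i) * Real.exp (t * f i (zs i))) := by
    intro zs
    rw [Finset.prod_mul_distrib, Finset.mul_sum, Real.exp_sum]
  simp only [key]
  rw [← Fintype.prod_sum (fun i z => p i z * Real.exp (t * f i z))]
  have hfac : ∀ i, ∑ z, p i z * Real.exp (t * f i z) ≤ Real.exp (3/16 * t^2) := by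
    intro i
    have step1 : ∑ z, p i z * Real.exp (t * f i z)
        ≤ ∑ z, p i z * (1 + t * f i z + (3/4) * (t * f i z)^2) := by
      refine Finset.sum_le_sum fun z _ => ?_
      refine mul_le_mul_of_nonneg_left ?_ (hp0 i z)
      refine exp_le_quad ?_
      rw [abs_mul]
      calc |t| * |f i z| ≤ 1 * 1 := by
            exact mul_le_mul ht (hf i z) (abs_nonneg _) zero_le_one
        _ = 1 := by ring
    refine step1.trans ?_
    have expand : ∑ z, p i z * (1 + t * f i z + (3/4) * (t * f i z)^2)
        = (∑ z, p i z) + t * (∑ z, p i z * f i z)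
          + (3/4) * t^2 * (∑ z, p i z * (f i z)^2) := by
      rw [Finset.mul_sum, Finset.mul_sum, ← Finset.sum_add_distrib, ← Finset.sum_add_distrib]
      refine Finset.sum_congr rfl fun z _ => by ring
    rw [expand, hp1 i, hmean i]
    have h4 : (3/4) * t^2 * (∑ z, p i z * (f i z)^2) ≤ (3/16) * t^2 := by
      have := hvar i
      nlinarith [sq_nonneg t]
    have := Real.add_one_le_exp (3/16 * t^2)
    simp only [mul_zero, add_zero]
    linarith
  calc ∏ i, ∑ z, p i z * Real.exp (t * f i z)
      ≤ ∏ _i : Fin n, Real.exp (3/16 * t^2) := by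
        refine Finset.prod_le_prod (fun i _ => ?_) (fun i _ => hfac i)
        exact Finset.sum_nonneg fun z _ => mul_nonneg (hp0 i z) (Real.exp_pos _).le
    _ = Real.exp (3/16 * n * t^2) := by
        rw [Finset.prod_const, ← Real.exp_nat_mul]
        congr 1; simp; ring

lemma chernoff_tail {Z : Type*} [Fintype Z] {n : ℕ} (p f : Fin n → Z → ℝ)
    (hp0 : ∀ i z, 0 ≤ p i z) (hp1 : ∀ i, ∑ z, p i z = 1)
    (hf : ∀ i z, |f i z| ≤ 1) (hmean : ∀ i, ∑ z, p i z * f i z = 0)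
    (hvar : ∀ i, ∑ z, p i z * (f i z)^2 ≤ 1/4) (t s : ℝ) (ht0 : 0 ≤ t) (ht : t ≤ 1) :
    ∑ zs : Fin n → Z, (if s ≤ ∑ i, f i (zs i) then ∏ i, p i (zs i) else 0)
      ≤ Real.exp (-(t*s) + 3/16 * n * t^2) := by
  classical
  have step : ∀ zs : Fin n → Z,
      (if s ≤ ∑ i, f i (zs i) then ∏ i, p i (zs i) else 0)
        ≤ Real.exp (-(t*s)) * ((∏ i, p i (zs i)) * Real.exp (t * ∑ i, f i (zs i))) := by
    intro zs
    have hprod : 0 ≤ ∏ i, p i (zs i) := Finset.prod_nonneg fun i _ => hp0 i (zs i)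
    split_ifs with hc
    · rw [← mul_assoc, mul_comm (Real.exp _) _, mul_assoc, ← Real.exp_add]
      nth_rewrite 1 [← mul_one (∏ i, p i (zs i))]
      refine mul_le_mul_of_nonneg_left ?_ hprod
      rw [← Real.exp_zero]
      refine Real.exp_le_exp.2 ?_
      nlinarith
    · positivity
  refine (Finset.sum_le_sum fun zs _ => step zs).trans ?_
  rw [← Finset.mul_sum]
  calc Real.exp (-(t*s)) * ∑ zs : Fin n → Z, (∏ i, p i (zs i)) * Real.exp (t * ∑ i, f i (zs i))
      ≤ Real.exp (-(t*s)) * Real.exp (3/16 * n * t^2) :=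
        mul_le_mul_of_nonneg_left
          (chernoff_mgf p f hp0 hp1 hf hmean hvar t (abs_le.2 ⟨by linarith, ht⟩))
          (Real.exp_pos _).le
    _ = Real.exp (-(t*s) + 3/16 * n * t^2) := (Real.exp_add _ _).symm

open Classical in
theorem atypicality_of_cheating {X Z : Type*} [Fintype X] [Fintype Z]
    (n : ℕ) (W : X → Z → ℝ) (hW0 : ∀ x z, 0 ≤ W x z) (hW1 : ∀ x, ∑ z, W x z = 1)
    (a : X) (δ κ lam : ℝ) (hδ : 0 < δ) (hκ : 0 < κ) (hlam : 0 < lam)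
    (hsep : ∀ P : X → ℝ, (∀ x, 0 ≤ P x) → ∑ x, P x = 1 → P a = 0 →
      δ ≤ ∑ z, |W a z - ∑ x, P x * W x z|)
    (xs xt : Fin n → X)
    (hdist : κ * n ≤ ((univ.filter (fun k => xt k = a ∧ xs k ≠ xt k)).card : ℝ))
    (hIa : lam * n ≤ ((univ.filter (fun k => xt k = a)).card : ℝ)) :
    ∑ zs : Fin n → Z,
        (if (∀ (x : X) (z : Z),
              |((univ.filter (fun i => xt i = x ∧ zs i = z)).card : ℝ)
                  - W x z * ((univ.filter (fun i => xt i = x)).card : ℝ)|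
                ≤ (lam * δ * κ / (2 * (Fintype.card Z : ℝ))) * n
              ∧ (W x z = 0 → (univ.filter (fun i => xt i = x ∧ zs i = z)).card = 0)) then
          ∏ i, W (xs i) (zs i) else 0)
      ≤ 2 * Real.exp (-(n * (lam * δ * κ / (2 * (Fintype.card Z : ℝ))) ^ 2) / 3) := by
  classical
  have hZne : Nonempty Z := by
    by_contra h
    rw [not_nonempty_iff] at h
    have := hW1 a
    rw [Finset.univ_eq_empty, Finset.sum_empty] at this
    norm_num at this
  have hc1 : (1:ℝ) ≤ (Fintype.card Z : ℝ) := by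
    exact_mod_cast Fintype.card_pos
  have hc0 : (0:ℝ) < (Fintype.card Z : ℝ) := lt_of_lt_of_le one_pos hc1
  have hcne : (Fintype.card Z : ℝ) ≠ 0 := ne_of_gt hc0
  set ε : ℝ := lam * δ * κ / (2 * (Fintype.card Z : ℝ)) with hεdef
  have hε0 : 0 < ε := by
    rw [hεdef]
    exact div_pos (mul_pos (mul_pos hlam hδ) hκ) (by linarith)
  have hWle1 : ∀ x z, W x z ≤ 1 := by
    intro x z
    have h := Finset.single_le_sum (f := W x) (fun z _ => hW0 x z) (mem_univ z)
    rw [hW1 x] at h; exact h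
  have hmass : ∑ zs : Fin n → Z, ∏ i, W (xs i) (zs i) = 1 := by
    rw [← Fintype.prod_sum (fun i z => W (xs i) z)]
    simp [hW1]
  rcases Nat.eq_zero_or_pos n with hn | hn
  · subst hn
    refine le_trans (le_trans (Finset.sum_le_sum fun zs _ => ?_) hmass.le) ?_
    · split_ifs
      · exact le_refl _
      · exact Finset.prod_nonneg fun i _ => hW0 _ _
    · norm_num
  -- main case
  have hn0 : (0:ℝ) < n := by exact_mod_cast hn
  set J := univ.filter (fun k : Fin n => xt k = a ∧ xs k ≠ xt k) with hJdef
  set I := univ.filter (fun k : Fin n => xt k = a) with hIdef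
  have hJI : J ⊆ I := by
    intro k hk
    rw [hJdef, mem_filter] at hk
    rw [hIdef, mem_filter]
    exact ⟨hk.1, hk.2.1⟩
  have hIcard_le : (I.card : ℝ) ≤ n := by
    have := Finset.card_le_univ I
    rw [Fintype.card_fin] at this
    exact_mod_cast this
  have hJcard_le : (J.card : ℝ) ≤ n := by
    have := Finset.card_le_univ J
    rw [Fintype.card_fin] at this
    exact_mod_cast this
  have hκ1 : κ ≤ 1 := by nlinarith
  have hlam1 : lam ≤ 1 := by nlinarith
  have hJcard0 : (0:ℝ) < J.card := lt_of_lt_of_le (mul_pos hκ hn0) hdist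
  have hJne : J.Nonempty := by
    rw [← Finset.card_pos]
    exact_mod_cast hJcard0
  obtain ⟨k0, hk0⟩ := hJne
  rw [hJdef, mem_filter] at hk0
  have hba : xs k0 ≠ a := fun h => hk0.2.2 (h.trans hk0.2.1.symm)
  have hδ2 : δ ≤ 2 := by
    have hs := hsep (fun x => if x = xs k0 then 1 else 0)
      (fun x => by by_cases hx : x = xs k0 <;> simp [hx])
      (by simp) (by rw [if_neg (fun h => hba h.symm)])
    have he : ∀ z, ∑ x, (if x = xs k0 then (1:ℝ) else 0) * W x z = W (xs k0) z := by
      intro z; simp [ite_mul]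
    rw [show (∑ z, |W a z - ∑ x, (if x = xs k0 then (1:ℝ) else 0) * W x z|)
        = ∑ z, |W a z - W (xs k0) z| from Finset.sum_congr rfl fun z _ => by rw [he z]] at hs
    have hb : ∑ z, |W a z - W (xs k0) z| ≤ ∑ z, (W a z + W (xs k0) z) := by
      refine Finset.sum_le_sum fun z _ => abs_le.2 ⟨?_, ?_⟩
      · have := hW0 a z; have := hW0 (xs k0) z; linarith
      · have := hW0 (xs k0) z; linarith
    rw [Finset.sum_add_distrib, hW1, hW1] at hb
    linarith
  have hε1 : ε ≤ 1 := by
    rw [hεdef, div_le_one (by linarith)]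
    have h1 : lam * δ ≤ δ := by nlinarith [mul_le_mul_of_nonneg_right hlam1 hδ.le]
    have h2 : lam * δ * κ ≤ lam * δ := by
      nlinarith [mul_le_mul_of_nonneg_left hκ1 (mul_nonneg hlam.le hδ.le)]
    linarith
  -- Step B : separation of expected counts
  set D : Z → ℝ := fun z => (∑ k ∈ I, W (xs k) z) - W a z * I.card with hDdef
  have hDJ : ∀ z, D z = ∑ k ∈ J, (W (xs k) z - W a z) := by
    intro z
    rw [hDdef]
    have heq : ∑ k ∈ J, (W (xs k) z - W a z) = ∑ k ∈ I, (W (xs k) z - W a z) := by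
      refine Finset.sum_subset hJI fun k hkI hkJ => ?_
      rw [hIdef, mem_filter] at hkI
      rw [hJdef, mem_filter] at hkJ
      push_neg at hkJ
      have : xs k = xt k := hkJ (mem_univ k) hkI.2
      rw [this, hkI.2, sub_self]
    rw [heq, Finset.sum_sub_distrib, Finset.sum_const, nsmul_eq_mul, mul_comm]
  have hsumD : δ * (κ * n) ≤ ∑ z, |D z| := by
    set P : X → ℝ := fun x => ((J.filter (fun k => xs k = x)).card : ℝ) / J.card with hPdef
    have hP0 : ∀ x, 0 ≤ P x := fun x => by rw [hPdef]; positivity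
    have hPsum : ∑ x, P x = 1 := by
      rw [hPdef]
      simp only []
      rw [← Finset.sum_div, div_eq_one_iff_eq (ne_of_gt hJcard0), ← Nat.cast_sum]
      congr 1
      exact (Finset.card_eq_sum_card_fiberwise (f := xs) (t := univ)
        (fun k _ => mem_univ _)).symm
    have hPa : P a = 0 := by
      rw [hPdef]
      simp only []
      have : (J.filter (fun k => xs k = a)) = ∅ := by
        refine Finset.filter_eq_empty_iff.2 fun k hk => ?_
        rw [hJdef, mem_filter] at hk
        exact fun h => hk.2.2 (h.trans hk.2.1.symm)
      simp [this]
    have hkey := hsep P hP0 hPsum hPa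
    have hPW : ∀ z, ∑ x, P x * W x z = (∑ k ∈ J, W (xs k) z) / J.card := by
      intro z
      rw [hPdef]
      simp only []
      have hfib : ∀ x : X, ∑ k ∈ J.filter (fun k => xs k = x), W (xs k) z
          = ((J.filter (fun k => xs k = x)).card : ℝ) * W x z := by
        intro x
        calc ∑ k ∈ J.filter (fun k => xs k = x), W (xs k) z
            = ∑ _k ∈ J.filter (fun k => xs k = x), W x z :=
              Finset.sum_congr rfl (fun k hk => by rw [(Finset.mem_filter.1 hk).2])
          _ = _ := by rw [Finset.sum_const, nsmul_eq_mul]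
      rw [show (∑ k ∈ J, W (xs k) z)
          = ∑ x, ∑ k ∈ J.filter (fun k => xs k = x), W (xs k) z from
        (Finset.sum_fiberwise_of_maps_to (fun k _ => mem_univ (xs k)) _).symm]
      rw [Finset.sum_div]
      refine Finset.sum_congr rfl fun x _ => ?_
      rw [hfib x]
      ring
    have habs : ∀ z, |W a z - ∑ x, P x * W x z| = |D z| / J.card := by
      intro z
      rw [hPW z, hDJ z]
      rw [Finset.sum_sub_distrib, Finset.sum_const, nsmul_eq_mul]
      rw [show W a z - ((∑ k ∈ J, W (xs k) z) / J.card)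
          = -((∑ k ∈ J, W (xs k) z) - (J.card : ℝ) * W a z) / J.card from by
        field_simp; ring]
      rw [abs_div, abs_of_pos hJcard0, abs_neg]
    rw [Finset.sum_congr rfl (fun z _ => habs z), ← Finset.sum_div] at hkey
    rw [le_div_iff₀ hJcard0] at hkey
    calc δ * (κ * n) ≤ δ * J.card := mul_le_mul_of_nonneg_left hdist hδ.le
      _ ≤ ∑ z, |D z| := hkey
  have hzstar : ∃ zst : Z, δ * (κ * n) / (Fintype.card Z : ℝ) ≤ |D zst| := by
    by_contra hcon
    push_neg at hcon
    have hlt : ∑ z, |D z| < ∑ _z : Z, δ * (κ * n) / (Fintype.card Z : ℝ) :=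
      Finset.sum_lt_sum_of_nonempty Finset.univ_nonempty fun z _ => hcon z
    rw [Finset.sum_const, Finset.card_univ, nsmul_eq_mul,
      mul_div_cancel₀ _ hcne] at hlt
    linarith
  obtain ⟨zst, hzst⟩ := hzstar
  have h2ε : 2 * (ε * n) ≤ |D zst| := by
    refine le_trans ?_ hzst
    rw [hεdef]
    rw [show 2 * (lam * δ * κ / (2 * (Fintype.card Z : ℝ)) * n)
        = lam * (δ * (κ * n) / (Fintype.card Z : ℝ)) from by
      rw [mul_comm (2:ℝ) (Fintype.card Z : ℝ), ← div_div]
      ring]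
    nth_rewrite 2 [show δ * (κ * n) / (Fintype.card Z : ℝ)
        = 1 * (δ * (κ * n) / (Fintype.card Z : ℝ)) from (one_mul _).symm]
    exact mul_le_mul_of_nonneg_right hlam1
      (le_of_lt (div_pos (mul_pos hδ (mul_pos hκ hn0)) hc0))
  -- Step C : the random variables
  set f : Fin n → Z → ℝ :=
    fun i z => if xt i = a then ((if z = zst then (1:ℝ) else 0) - W (xs i) zst) else 0
    with hfdef
  have hfabs : ∀ i z, |f i z| ≤ 1 := by
    intro i z
    have hw0 := hW0 (xs i) zst
    have hw1 := hWle1 (xs i) zst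
    simp only [hfdef]
    split_ifs with h1 h2
    · rw [abs_le]
      refine ⟨by linarith, by linarith⟩
    · rw [abs_le]
      refine ⟨by linarith, by linarith⟩
    · simp
  have hmean : ∀ i, ∑ z, W (xs i) z * f i z = 0 := by
    intro i
    simp only [hfdef]
    by_cases h : xt i = a
    · simp only [if_pos h]
      rw [Finset.sum_congr rfl (fun z _ => mul_sub (W (xs i) z) _ _)]
      rw [Finset.sum_sub_distrib]
      have e1 : ∑ z, W (xs i) z * (if z = zst then (1:ℝ) else 0) = W (xs i) zst := by
        simp [mul_ite]
      rw [e1, ← Finset.sum_mul, hW1, one_mul, sub_self]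
    · simp [h]
  have hvar : ∀ i, ∑ z, W (xs i) z * (f i z)^2 ≤ 1/4 := by
    intro i
    simp only [hfdef]
    by_cases h : xt i = a
    · simp only [if_pos h]
      have e1 : ∑ z, W (xs i) z * ((if z = zst then (1:ℝ) else 0) - W (xs i) zst)^2
          = ∑ z, (W (xs i) z * (if z = zst then (1:ℝ) else 0) * (1 - 2 * W (xs i) zst)
              + W (xs i) z * (W (xs i) zst)^2) := by
        refine Finset.sum_congr rfl fun z _ => ?_
        split_ifs <;> ring
      rw [e1, Finset.sum_add_distrib]
      have e2 : ∑ z, W (xs i) z * (if z = zst then (1:ℝ) else 0) * (1 - 2 * W (xs i) zst)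
          = W (xs i) zst * (1 - 2 * W (xs i) zst) := by
        rw [← Finset.sum_mul]
        congr 1
        simp [mul_ite]
      have e3 : ∑ z, W (xs i) z * (W (xs i) zst)^2 = (W (xs i) zst)^2 := by
        rw [← Finset.sum_mul, hW1, one_mul]
      rw [e2, e3]
      nlinarith [hW0 (xs i) zst, hWle1 (xs i) zst, sq_nonneg (2 * W (xs i) zst - 1)]
    · simp [h]
  have hfS : ∀ zs : Fin n → Z, ∑ i, f i (zs i)
      = ((univ.filter (fun i => xt i = a ∧ zs i = zst)).card : ℝ)
        - ∑ k ∈ I, W (xs k) zst := by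
    intro zs
    simp only [hfdef]
    rw [show (∑ i, if xt i = a then ((if zs i = zst then (1:ℝ) else 0) - W (xs i) zst) else 0)
        = ∑ i ∈ I, ((if zs i = zst then (1:ℝ) else 0) - W (xs i) zst) from
      (Finset.sum_filter _ _).symm]
    rw [Finset.sum_sub_distrib]
    congr 1
    rw [Finset.sum_boole]
    congr 1
    rw [hIdef, Finset.filter_filter]
  have hDz : D zst = (∑ k ∈ I, W (xs k) zst) - W a zst * I.card := by rw [hDdef]
  -- pointwise bound
  have hpoint : ∀ zs : Fin n → Z,
      (if (∀ (x : X) (z : Z),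
            |((univ.filter (fun i => xt i = x ∧ zs i = z)).card : ℝ)
                - W x z * ((univ.filter (fun i => xt i = x)).card : ℝ)|
              ≤ ε * n
            ∧ (W x z = 0 → (univ.filter (fun i => xt i = x ∧ zs i = z)).card = 0)) then
        ∏ i, W (xs i) (zs i) else 0)
      ≤ (if ε * n ≤ ∑ i, f i (zs i) then ∏ i, W (xs i) (zs i) else 0)
        + (if ε * n ≤ ∑ i, -f i (zs i) then ∏ i, W (xs i) (zs i) else 0) := by
    intro zs
    have hprod : 0 ≤ ∏ i, W (xs i) (zs i) := Finset.prod_nonneg fun i _ => hW0 _ _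
    have hnn1 : 0 ≤ (if ε * n ≤ ∑ i, f i (zs i) then ∏ i, W (xs i) (zs i) else 0) := by
      split_ifs <;> [exact hprod; exact le_refl 0]
    have hnn2 : 0 ≤ (if ε * n ≤ ∑ i, -f i (zs i) then ∏ i, W (xs i) (zs i) else 0) := by
      split_ifs <;> [exact hprod; exact le_refl 0]
    by_cases htyp : (∀ (x : X) (z : Z),
        |((univ.filter (fun i => xt i = x ∧ zs i = z)).card : ℝ)
            - W x z * ((univ.filter (fun i => xt i = x)).card : ℝ)|
          ≤ ε * n
        ∧ (W x z = 0 → (univ.filter (fun i => xt i = x ∧ zs i = z)).card = 0))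
    · rw [if_pos htyp]
      have h1 := (htyp a zst).1
      have hIcast : ((univ.filter (fun i : Fin n => xt i = a)).card : ℝ) = (I.card : ℝ) := by
        rw [hIdef]
      have hS := hfS zs
      have htri : |D zst| ≤ |(∑ k ∈ I, W (xs k) zst)
            - ((univ.filter (fun i => xt i = a ∧ zs i = zst)).card : ℝ)|
          + |((univ.filter (fun i => xt i = a ∧ zs i = zst)).card : ℝ)
            - W a zst * I.card| := by
        rw [hDz]
        exact abs_sub_le _ _ _
      have h1' : |((univ.filter (fun i => xt i = a ∧ zs i = zst)).card : ℝ)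
          - W a zst * (I.card : ℝ)| ≤ ε * n := by
        rw [← hIcast]; exact h1
      have hdev : ε * n ≤ |∑ i, f i (zs i)| := by
        rw [hS, abs_sub_comm]
        linarith [htri, h1', h2ε]
      have hnegsum : ∑ i, -f i (zs i) = -∑ i, f i (zs i) := by
        rw [← Finset.sum_neg_distrib]
      rcases le_abs.1 hdev with hcase | hcase
      · rw [if_pos hcase]
        refine le_add_of_le_of_nonneg (le_refl _) hnn2
      · rw [hnegsum] at hnn2 ⊢
        rw [if_pos hcase]
        refine le_add_of_nonneg_of_le hnn1 (le_refl _)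
    · rw [if_neg htyp]
      exact add_nonneg hnn1 hnn2
  -- combine
  have tail1 := chernoff_tail (fun i z => W (xs i) z) f
    (fun i z => hW0 _ _) (fun i => hW1 _) hfabs hmean hvar ε (ε * n) hε0.le hε1
  have tail2 := chernoff_tail (fun i z => W (xs i) z) (fun i z => -f i z)
    (fun i z => hW0 _ _) (fun i => hW1 _)
    (fun i z => by rw [abs_neg]; exact hfabs i z)
    (fun i => by simp only [mul_neg, Finset.sum_neg_distrib, hmean i, neg_zero])
    (fun i => by simp only [neg_sq]; exact hvar i)
    ε (ε * n) hε0.le hε1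
  have hexp : Real.exp (-(ε * (ε * n)) + 3/16 * n * ε^2)
      ≤ Real.exp (-(n * ε^2) / 3) := by
    refine Real.exp_le_exp.2 ?_
    nlinarith [mul_nonneg hn0.le (sq_nonneg ε)]
  calc ∑ zs : Fin n → Z,
      (if (∀ (x : X) (z : Z),
            |((univ.filter (fun i => xt i = x ∧ zs i = z)).card : ℝ)
                - W x z * ((univ.filter (fun i => xt i = x)).card : ℝ)|
              ≤ ε * n
            ∧ (W x z = 0 → (univ.filter (fun i => xt i = x ∧ zs i = z)).card = 0)) then
        ∏ i, W (xs i) (zs i) else 0)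
      ≤ ∑ zs : Fin n → Z,
        ((if ε * n ≤ ∑ i, f i (zs i) then ∏ i, W (xs i) (zs i) else 0)
          + (if ε * n ≤ ∑ i, -f i (zs i) then ∏ i, W (xs i) (zs i) else 0)) :=
      Finset.sum_le_sum fun zs _ => hpoint zs
    _ = (∑ zs : Fin n → Z, (if ε * n ≤ ∑ i, f i (zs i) then ∏ i, W (xs i) (zs i) else 0))
        + ∑ zs : Fin n → Z, (if ε * n ≤ ∑ i, -f i (zs i) then ∏ i, W (xs i) (zs i) else 0) :=
      Finset.sum_add_distrib
    _ ≤ Real.exp (-(ε * (ε * n)) + 3/16 * n * ε^2)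
        + Real.exp (-(ε * (ε * n)) + 3/16 * n * ε^2) := add_le_add tail1 tail2
    _ ≤ 2 * Real.exp (-(n * ε^2) / 3) := by
      rw [two_mul]
      exact add_le_add hexp hexp
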